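/- There is an absolute constant C > 0 (one may take C = √(4π·ln 2)) such that the following holds: for every nondecreasing g : ℝ → ℝ with g(τ) ≥ 1 for all τ ≥ 0, every natural number N ≥ 1, and every measurable F : ℝ³ → [0,∞), one has ∫_{1 ≤ |ξ| ≤ 2^N} |ξ|·F(ξ) dξ ≤ C·√N·g(2^N)² · (∫_{ℝ³} (|ξ|⁵ / g(|ξ|)⁴)·F(ξ)² dξ)^(1/2). -/

import Mathlib

open MeasureTheory Real
open scoped ENNReal

/-- Every point of the annulus `1 ≤ r ≤ 2^N` lies in a dyadic annulus. -/
lemma stmt17_dyadic {r : ℝ} {N : ℕ} (hN : 1 ≤ N) (h1 : 1 ≤ r) (h2 : r ≤ (2:ℝ) ^ N) :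
    ∃ l : ℕ, l < N ∧ (2:ℝ) ^ l ≤ r ∧ r ≤ (2:ℝ) ^ (l + 1) := by
  set m : ℕ := ⌊r⌋₊ with hm
  have hm1 : 1 ≤ m := Nat.one_le_iff_ne_zero.mpr (by
    simp [hm, Nat.floor_eq_zero, not_lt, h1])
  set l : ℕ := Nat.log 2 m with hl
  have hlow : (2:ℝ) ^ l ≤ r := by
    have : (2:ℕ) ^ l ≤ m := Nat.pow_log_le_self 2 (by omega)
    calc (2:ℝ) ^ l = ((2:ℕ) ^ l : ℕ) := by push_cast; ring
      _ ≤ (m : ℝ) := by exact_mod_cast this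
      _ ≤ r := Nat.floor_le (by linarith)
  have hhigh : r ≤ (2:ℝ) ^ (l + 1) := by
    have h' : m < 2 ^ (l + 1) := Nat.lt_pow_succ_log_self (by norm_num) m
    have h'' : (m : ℝ) + 1 ≤ ((2:ℕ) ^ (l + 1) : ℕ) := by exact_mod_cast h'
    have := Nat.lt_floor_add_one r
    push_cast at h''
    linarith
  by_cases hlN : l < N
  · exact ⟨l, hlN, hlow, hhigh⟩
  · -- then 2^N ≤ 2^l ≤ r ≤ 2^N, so r = 2^N; use l = N - 1
    have hNl : (2:ℝ) ^ N ≤ (2:ℝ) ^ l := by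
      apply pow_le_pow_right₀ (by norm_num) (by omega)
    refine ⟨N - 1, by omega, ?_, ?_⟩
    · calc (2:ℝ) ^ (N - 1) ≤ (2:ℝ) ^ N := pow_le_pow_right₀ (by norm_num) (by omega)
        _ ≤ (2:ℝ) ^ l := hNl
        _ ≤ r := hlow
    · have : N - 1 + 1 = N := by omega
      rw [this]; exact h2

/-- **middle-frequency estimate.** There is an absolute constant
`C > 0` (one may take `C = √(4π·ln 2)`) such that for every nondecreasing `g : ℝ → ℝ`
with `g ≥ 1` on `[0,∞)`, every `N ≥ 1`, and every measurable `F : ℝ³ → [0,∞)`,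
`∫_{1 ≤ |ξ| ≤ 2^N} |ξ| F(ξ) dξ ≤ C √N g(2^N)² ( ∫ (|ξ|⁵/g(|ξ|)⁴) F(ξ)² dξ )^(1/2)`. -/
theorem stmt17 :
    ∃ C : ℝ, 0 < C ∧
      ∀ (g : ℝ → ℝ), Monotone g → (∀ τ : ℝ, 0 ≤ τ → 1 ≤ g τ) →
      ∀ N : ℕ, 1 ≤ N →
      ∀ F : EuclideanSpace ℝ (Fin 3) → ℝ, Measurable F → (∀ ξ, 0 ≤ F ξ) →
        (∫⁻ ξ in {ξ : EuclideanSpace ℝ (Fin 3) | 1 ≤ ‖ξ‖ ∧ ‖ξ‖ ≤ (2:ℝ) ^ N},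
            ENNReal.ofReal (‖ξ‖ * F ξ)) ≤
          ENNReal.ofReal (C * Real.sqrt N * (g ((2:ℝ) ^ N)) ^ 2) *
            (∫⁻ ξ, ENNReal.ofReal (‖ξ‖ ^ 5 / (g ‖ξ‖) ^ 4 * (F ξ) ^ 2)) ^ (1/2 : ℝ) := by
  classical
  set E := EuclideanSpace ℝ (Fin 3)
  set V : ℝ := (volume (Metric.ball (0:E) 1)).toReal with hV
  have hVfin : volume (Metric.ball (0:E) 1) ≠ ⊤ := measure_ball_lt_top.ne
  have hVpos : 0 < V := ENNReal.toReal_pos (by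
    simpa using (Metric.measure_ball_pos volume (0:E) one_pos).ne') hVfin
  have hVeq : volume (Metric.ball (0:E) 1) = ENNReal.ofReal V :=
    (ENNReal.ofReal_toReal hVfin).symm
  refine ⟨Real.sqrt (8 * V), Real.sqrt_pos.mpr (by linarith), ?_⟩
  intro g hg hg1 N hN F hF hF0
  set S : Set E := {ξ : E | 1 ≤ ‖ξ‖ ∧ ‖ξ‖ ≤ (2:ℝ) ^ N} with hS
  have hSm : MeasurableSet S := by
    apply MeasurableSet.inter
    · exact measurableSet_le measurable_const measurable_norm
    · exact measurableSet_le measurable_norm measurable_const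
  set G : ℝ := g ((2:ℝ) ^ N) with hG
  have hG1 : 1 ≤ G := hg1 _ (by positivity)
  -- the two halves of Cauchy-Schwarz
  set a : E → ℝ≥0∞ := fun ξ => ENNReal.ofReal (Real.sqrt (g ‖ξ‖ ^ 4 / ‖ξ‖ ^ 3)) with ha
  set b : E → ℝ≥0∞ :=
    fun ξ => ENNReal.ofReal (Real.sqrt (‖ξ‖ ^ 5 / g ‖ξ‖ ^ 4 * F ξ ^ 2)) with hb
  have hgm : Measurable fun ξ : E => g ‖ξ‖ := hg.measurable.comp measurable_norm
  have ham : Measurable a := by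
    apply ENNReal.measurable_ofReal.comp
    exact (Real.continuous_sqrt.measurable.comp ((hgm.pow_const 4).div (measurable_norm.pow_const 3)))
  have hbm : Measurable b := by
    apply ENNReal.measurable_ofReal.comp
    exact (Real.continuous_sqrt.measurable.comp
      (((measurable_norm.pow_const 5).div (hgm.pow_const 4)).mul (hF.pow_const 2)))
  have hconj : Real.HolderConjugate 2 2 := ⟨by norm_num, by norm_num, by norm_num⟩
  -- pointwise bound on S
  have hpt : ∀ ξ ∈ S, ENNReal.ofReal (‖ξ‖ * F ξ) ≤ (a * b) ξ := by
    intro ξ hξ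
    obtain ⟨h1, _⟩ := hξ
    have hn0 : (0:ℝ) < ‖ξ‖ := by linarith
    have hgξ : (1:ℝ) ≤ g ‖ξ‖ := hg1 _ hn0.le
    have hgp : (0:ℝ) < g ‖ξ‖ := lt_of_lt_of_le one_pos hgξ
    have hx : (0:ℝ) ≤ g ‖ξ‖ ^ 4 / ‖ξ‖ ^ 3 := by positivity
    simp only [Pi.mul_apply, ha, hb, ← ENNReal.ofReal_mul (Real.sqrt_nonneg _),
      ← Real.sqrt_mul hx]
    apply ENNReal.ofReal_le_ofReal
    have : g ‖ξ‖ ^ 4 / ‖ξ‖ ^ 3 * (‖ξ‖ ^ 5 / g ‖ξ‖ ^ 4 * F ξ ^ 2) = (‖ξ‖ * F ξ) ^ 2 := by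
      field_simp
    rw [this, Real.sqrt_sq (mul_nonneg (norm_nonneg _) (hF0 ξ))]
  -- Cauchy-Schwarz on S
  have hCS : (∫⁻ ξ in S, ENNReal.ofReal (‖ξ‖ * F ξ)) ≤
      (∫⁻ ξ in S, a ξ ^ (2:ℝ)) ^ (1/2 : ℝ) * (∫⁻ ξ in S, b ξ ^ (2:ℝ)) ^ (1/2 : ℝ) := by
    refine le_trans (setLIntegral_mono (ham.mul hbm) hpt) ?_
    exact ENNReal.lintegral_mul_le_Lp_mul_Lq _ hconj ham.aemeasurable hbm.aemeasurable
  -- bound the first factor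
  have hafac : (∫⁻ ξ in S, a ξ ^ (2:ℝ)) ≤ ENNReal.ofReal ((Real.sqrt (8*V) * Real.sqrt N * G ^ 2) ^ 2) := by
    set A : ℕ → Set E := fun l =>
      if l < N then {ξ : E | (2:ℝ) ^ l ≤ ‖ξ‖ ∧ ‖ξ‖ ≤ (2:ℝ) ^ (l+1)} else ∅ with hA
    have hSsub : S ⊆ ⋃ l, A l := by
      intro ξ hξ
      obtain ⟨l, hlN, h1, h2⟩ := stmt17_dyadic hN hξ.1 hξ.2
      exact Set.mem_iUnion.mpr ⟨l, by simp [hA, hlN, h1, h2]⟩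
    have hterm : ∀ l : ℕ, (∫⁻ ξ in A l, a ξ ^ (2:ℝ)) ≤
        (if l < N then ENNReal.ofReal (8 * G ^ 4 * V) else 0) := by
      intro l
      by_cases hlN : l < N
      · simp only [hA, hlN, if_true]
        have hbd : ∀ ξ ∈ {ξ : E | (2:ℝ) ^ l ≤ ‖ξ‖ ∧ ‖ξ‖ ≤ (2:ℝ) ^ (l+1)},
            a ξ ^ (2:ℝ) ≤ ENNReal.ofReal (G ^ 4 / ((2:ℝ) ^ l) ^ 3) := by
          intro ξ hξ
          obtain ⟨h1, h2⟩ := hξ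
          have hn0 : (0:ℝ) < ‖ξ‖ := lt_of_lt_of_le (by positivity) h1
          have hx : (0:ℝ) ≤ g ‖ξ‖ ^ 4 / ‖ξ‖ ^ 3 := by
            have := hg1 _ hn0.le; positivity
          have : a ξ ^ (2:ℝ) = ENNReal.ofReal (g ‖ξ‖ ^ 4 / ‖ξ‖ ^ 3) := by
            simp only [ha]
            rw [ENNReal.ofReal_rpow_of_nonneg (Real.sqrt_nonneg _) (by norm_num : (0:ℝ) ≤ 2),
              Real.rpow_two, Real.sq_sqrt hx]
          rw [this]
          apply ENNReal.ofReal_le_ofReal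
          have hgle : g ‖ξ‖ ≤ G := hg (le_trans h2 (pow_le_pow_right₀ (by norm_num) hlN))
          have hg0 : (0:ℝ) < g ‖ξ‖ := lt_of_lt_of_le one_pos (hg1 _ hn0.le)
          have hG0 : (0:ℝ) < G := lt_of_lt_of_le one_pos hG1
          apply div_le_div₀ (by positivity) (by
            exact pow_le_pow_left₀ hg0.le hgle 4) (by positivity)
          exact pow_le_pow_left₀ (by positivity) h1 3
        calc (∫⁻ ξ in {ξ : E | (2:ℝ) ^ l ≤ ‖ξ‖ ∧ ‖ξ‖ ≤ (2:ℝ) ^ (l+1)}, a ξ ^ (2:ℝ))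
            ≤ ∫⁻ _ in {ξ : E | (2:ℝ) ^ l ≤ ‖ξ‖ ∧ ‖ξ‖ ≤ (2:ℝ) ^ (l+1)},
              ENNReal.ofReal (G ^ 4 / ((2:ℝ) ^ l) ^ 3) :=
              setLIntegral_mono measurable_const hbd
          _ = ENNReal.ofReal (G ^ 4 / ((2:ℝ) ^ l) ^ 3) *
              volume {ξ : E | (2:ℝ) ^ l ≤ ‖ξ‖ ∧ ‖ξ‖ ≤ (2:ℝ) ^ (l+1)} := by
              rw [setLIntegral_const]
          _ ≤ ENNReal.ofReal (G ^ 4 / ((2:ℝ) ^ l) ^ 3) *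
              volume (Metric.closedBall (0:E) ((2:ℝ) ^ (l+1))) := by
              apply mul_le_mul_right
              apply measure_mono
              intro ξ hξ
              simpa [Metric.mem_closedBall, dist_eq_norm] using hξ.2
          _ = ENNReal.ofReal (8 * G ^ 4 * V) := by
              rw [Measure.addHaar_closedBall _ _ (by positivity)]
              have hrank : Module.finrank ℝ E = 3 := finrank_euclideanSpace_fin
              rw [hrank, hVeq, ← ENNReal.ofReal_mul (by positivity),
                ← ENNReal.ofReal_mul (by positivity)]
              congr 1
              have h2l : ((2:ℝ) ^ l) ^ 3 > 0 := by positivity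
              field_simp
              ring
      · simp [hA, hlN]
    calc (∫⁻ ξ in S, a ξ ^ (2:ℝ)) ≤ ∫⁻ ξ in ⋃ l, A l, a ξ ^ (2:ℝ) :=
          lintegral_mono_set hSsub
      _ ≤ ∑' l, ∫⁻ ξ in A l, a ξ ^ (2:ℝ) := lintegral_iUnion_le _ _
      _ ≤ ∑' l, (if l < N then ENNReal.ofReal (8 * G ^ 4 * V) else 0) :=
          ENNReal.tsum_le_tsum hterm
      _ = ∑ l ∈ Finset.range N, (if l < N then ENNReal.ofReal (8 * G ^ 4 * V) else 0) := by
          apply tsum_eq_sum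
          intro l hl
          simp [Finset.mem_range] at hl
          simp [hl]
      _ = (N : ℝ≥0∞) * ENNReal.ofReal (8 * G ^ 4 * V) := by
          rw [Finset.sum_ite_of_true (fun l hl => Finset.mem_range.mp hl)]
          simp [Finset.sum_const, nsmul_eq_mul]
      _ = ENNReal.ofReal ((Real.sqrt (8*V) * Real.sqrt N * G ^ 2) ^ 2) := by
          have hsq8V : Real.sqrt (8*V) ^ 2 = 8 * V := Real.sq_sqrt (by linarith)
          have hsqN : Real.sqrt N ^ 2 = (N : ℝ) := Real.sq_sqrt (Nat.cast_nonneg N)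
          have : (Real.sqrt (8*V) * Real.sqrt N * G ^ 2) ^ 2
              = (N : ℝ) * (8 * G ^ 4 * V) := by
            have expand : (Real.sqrt (8*V) * Real.sqrt N * G ^ 2) ^ 2
                = Real.sqrt (8*V) ^ 2 * Real.sqrt N ^ 2 * G ^ 4 := by ring
            rw [expand, hsq8V, hsqN]; ring
          rw [this, ENNReal.ofReal_mul (Nat.cast_nonneg N)]
          congr 1
          simp [ENNReal.ofReal_natCast]
  -- bound the second factor
  have hbfac : (∫⁻ ξ in S, b ξ ^ (2:ℝ)) ≤
      ∫⁻ ξ, ENNReal.ofReal (‖ξ‖ ^ 5 / (g ‖ξ‖) ^ 4 * (F ξ) ^ 2) := by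
    have hbeq : ∀ ξ : E, b ξ ^ (2:ℝ) = ENNReal.ofReal (‖ξ‖ ^ 5 / (g ‖ξ‖) ^ 4 * (F ξ) ^ 2) := by
      intro ξ
      have hgξ : (1:ℝ) ≤ g ‖ξ‖ := hg1 _ (norm_nonneg _)
      have hx : (0:ℝ) ≤ ‖ξ‖ ^ 5 / g ‖ξ‖ ^ 4 * F ξ ^ 2 := by positivity
      simp only [hb]
      rw [ENNReal.ofReal_rpow_of_nonneg (Real.sqrt_nonneg _) (by norm_num : (0:ℝ) ≤ 2),
        Real.rpow_two, Real.sq_sqrt hx]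
    calc (∫⁻ ξ in S, b ξ ^ (2:ℝ))
        = ∫⁻ ξ in S, ENNReal.ofReal (‖ξ‖ ^ 5 / (g ‖ξ‖) ^ 4 * (F ξ) ^ 2) := by
          exact lintegral_congr fun ξ => hbeq ξ
      _ ≤ ∫⁻ ξ, ENNReal.ofReal (‖ξ‖ ^ 5 / (g ‖ξ‖) ^ 4 * (F ξ) ^ 2) :=
          setLIntegral_le_lintegral _ _
  -- combine
  refine hCS.trans ?_
  have hK : (0:ℝ) ≤ Real.sqrt (8*V) * Real.sqrt N * G ^ 2 := by positivity
  have h1 : (∫⁻ ξ in S, a ξ ^ (2:ℝ)) ^ (1/2 : ℝ) ≤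
      ENNReal.ofReal (Real.sqrt (8*V) * Real.sqrt N * G ^ 2) := by
    calc (∫⁻ ξ in S, a ξ ^ (2:ℝ)) ^ (1/2 : ℝ)
        ≤ (ENNReal.ofReal ((Real.sqrt (8*V) * Real.sqrt N * G ^ 2) ^ 2)) ^ (1/2 : ℝ) :=
          ENNReal.rpow_le_rpow hafac (by norm_num)
      _ = ENNReal.ofReal (Real.sqrt (8*V) * Real.sqrt N * G ^ 2) := by
          rw [ENNReal.ofReal_pow hK, ← ENNReal.rpow_natCast (ENNReal.ofReal _) 2,
            ← ENNReal.rpow_mul]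
          norm_num
  have h2 : (∫⁻ ξ in S, b ξ ^ (2:ℝ)) ^ (1/2 : ℝ) ≤
      (∫⁻ ξ, ENNReal.ofReal (‖ξ‖ ^ 5 / (g ‖ξ‖) ^ 4 * (F ξ) ^ 2)) ^ (1/2 : ℝ) :=
    ENNReal.rpow_le_rpow hbfac (by norm_num)
  exact mul_le_mul' h1 h2
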